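/- Let d ≥ 1, let f : ℝᵈ → ℝ be a Schwartz function, and let β : ℝᵈ → ℝ be bounded and continuous. Define A_β = −∫ β·∇f dv, p_β = ∫ v·β·f dv, n_β = ∫ β·f dv, and B_β = −∫ β·(v·∇f) dv. Then n_β·B_β − A_β·p_β = −∫∫ β(v)·β(v')·(v − v')·∇f(v)·f(v') dv dv' = (1/2)·∫∫ β(v)·β(v')·(v − v')·(∇f(v')·f(v) − ∇f(v)·f(v')) dv dv'. -/

import Mathlib

open MeasureTheory
open scoped RealInnerProductSpace

/-- Double-integral representations of the denominator n_β·B_β − A_β·p_β of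
the effective-temperature formula of the conservative penalization operator. -/
theorem stmt9 (d : ℕ) (hd : 1 ≤ d)
    (f : SchwartzMap (EuclideanSpace ℝ (Fin d)) ℝ)
    (β : EuclideanSpace ℝ (Fin d) → ℝ)
    (hβc : Continuous β) (hβb : ∃ M, ∀ v, |β v| ≤ M)
    (Aβ pβ : EuclideanSpace ℝ (Fin d)) (nβ Bβ : ℝ)
    (hA : Aβ = -∫ v, β v • gradient (⇑f) v)
    (hp : pβ = ∫ v, (β v * f v) • v)
    (hn : nβ = ∫ v, β v * f v)
    (hB : Bβ = -∫ v, β v * ⟪v, gradient (⇑f) v⟫) :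
    nβ * Bβ - ⟪Aβ, pβ⟫ =
      -∫ v, ∫ v', β v * β v' * (⟪v - v', gradient (⇑f) v⟫ * f v') ∧
    nβ * Bβ - ⟪Aβ, pβ⟫ =
      (1 / 2) * ∫ v, ∫ v',
        β v * β v' * ⟪v - v', f v • gradient (⇑f) v' - f v' • gradient (⇑f) v⟫ := by
  obtain ⟨M, hM⟩ := hβb
  have hM0 : (0 : ℝ) ≤ M := (abs_nonneg _).trans (hM 0)
  set G : EuclideanSpace ℝ (Fin d) → EuclideanSpace ℝ (Fin d) := gradient (⇑f) with hGdef
  have hGc : Continuous G := by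
    have h1 : Continuous (fderiv ℝ (⇑f)) := (f.smooth ⊤).continuous_fderiv (by simp)
    exact (InnerProductSpace.toDual ℝ (EuclideanSpace ℝ (Fin d))).symm.continuous.comp h1
  have hGnorm : ∀ v, ‖G v‖ = ‖fderiv ℝ (⇑f) v‖ := fun v =>
    (InnerProductSpace.toDual ℝ (EuclideanSpace ℝ (Fin d))).symm.norm_map _
  have hf_int : Integrable (⇑f) := f.integrable
  have hvf_int : Integrable (fun v : EuclideanSpace ℝ (Fin d) => ‖v‖ * ‖f v‖) := by
    simpa using f.integrable_pow_mul volume 1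
  have hD0 : Integrable (fun v : EuclideanSpace ℝ (Fin d) => ‖fderiv ℝ (⇑f) v‖) := by
    have := (SchwartzMap.fderivCLM ℝ _ _ f).integrable_pow_mul volume 0
    simpa [SchwartzMap.fderivCLM_apply] using this
  have hD1 : Integrable (fun v : EuclideanSpace ℝ (Fin d) => ‖v‖ * ‖fderiv ℝ (⇑f) v‖) := by
    have := (SchwartzMap.fderivCLM ℝ _ _ f).integrable_pow_mul volume 1
    simpa [SchwartzMap.fderivCLM_apply] using this
  -- integrability of the four basic integrands
  have hh_int : Integrable (fun v => β v * f v) := by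
    refine (hf_int.norm.const_mul M).mono' ((hβc.mul f.continuous).aestronglyMeasurable)
      (Filter.Eventually.of_forall fun v => ?_)
    rw [norm_mul, Real.norm_eq_abs]
    exact mul_le_mul_of_nonneg_right (hM v) (norm_nonneg _)
  have hhv_int : Integrable (fun v => (β v * f v) • v) := by
    refine (hvf_int.const_mul M).mono'
      (((hβc.mul f.continuous).smul continuous_id).aestronglyMeasurable)
      (Filter.Eventually.of_forall fun v => ?_)
    rw [norm_smul, Real.norm_eq_abs, abs_mul]
    calc |β v| * |f v| * ‖v‖ ≤ M * |f v| * ‖v‖ := by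
          gcongr; exact hM v
      _ = M * (‖v‖ * ‖f v‖) := by rw [Real.norm_eq_abs]; ring
  have hg_int : Integrable (fun v => β v • G v) := by
    refine (hD0.const_mul M).mono' ((hβc.smul hGc).aestronglyMeasurable)
      (Filter.Eventually.of_forall fun v => ?_)
    rw [norm_smul, Real.norm_eq_abs, hGnorm v]
    exact mul_le_mul_of_nonneg_right (hM v) (norm_nonneg _)
  have hB_int : Integrable (fun v => β v * ⟪v, G v⟫) := by
    refine (hD1.const_mul M).mono' ((hβc.mul (continuous_id.inner hGc)).aestronglyMeasurable)
      (Filter.Eventually.of_forall fun v => ?_)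
    rw [norm_mul, Real.norm_eq_abs, Real.norm_eq_abs]
    calc |β v| * |⟪v, G v⟫| ≤ M * (‖v‖ * ‖G v‖) :=
          mul_le_mul (hM v) (abs_real_inner_le_norm _ _) (abs_nonneg _) hM0
      _ = M * (‖v‖ * ‖fderiv ℝ (⇑f) v‖) := by rw [hGnorm]
  -- values of the four basic integrals
  have hAint : (∫ v, β v • G v) = -Aβ := by rw [hA, neg_neg]
  have hBint : (∫ v, β v * ⟪v, G v⟫) = -Bβ := by rw [hB, neg_neg]
  have hnint : (∫ v, β v * f v) = nβ := hn.symm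
  have hpint : (∫ v, (β v * f v) • v) = pβ := hp.symm
  -- inner integral for the first identity
  have hI1 : ∀ v, Integrable (fun v' => β v * β v' * (⟪v - v', G v⟫ * f v')) := by
    intro v
    have h34 : Integrable (fun v' =>
        (β v * ⟪v, G v⟫) * (β v' * f v') - β v * ⟪G v, (β v' * f v') • v'⟫) :=
      (hh_int.const_mul _).sub ((hhv_int.const_inner (G v)).const_mul _)
    refine h34.congr (Filter.Eventually.of_forall fun v' => ?_)
    simp only [inner_sub_left, real_inner_smul_right, real_inner_comm (G v) v']
    ring
  have key1 : ∀ v, (∫ v', β v * β v' * (⟪v - v', G v⟫ * f v'))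
      = (β v * ⟪v, G v⟫) * nβ - ⟪pβ, β v • G v⟫ := by
    intro v
    have h3 : Integrable (fun v' => (β v * ⟪v, G v⟫) * (β v' * f v')) := hh_int.const_mul _
    have h4 : Integrable (fun v' => β v * ⟪G v, (β v' * f v') • v'⟫) :=
      (hhv_int.const_inner (G v)).const_mul _
    have e : (fun v' => β v * β v' * (⟪v - v', G v⟫ * f v'))
        = fun v' => (β v * ⟪v, G v⟫) * (β v' * f v') - β v * ⟪G v, (β v' * f v') • v'⟫ := by
      funext v'
      simp only [inner_sub_left, real_inner_smul_right, real_inner_comm (G v) v']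
      ring
    rw [e, integral_sub h3 h4, integral_const_mul, integral_const_mul,
      integral_inner hhv_int (G v), hnint, hpint, real_inner_smul_right,
      real_inner_comm (G v) pβ]
  -- inner integral for the second identity
  have key2 : ∀ v, (∫ v', β v * β v' * ⟪v - v', f v • G v' - f v' • G v⟫)
      = ((β v * f v) * ⟪v, -Aβ⟫ - (β v * f v) * (-Bβ))
        - ((β v * ⟪v, G v⟫) * nβ - ⟪pβ, β v • G v⟫) := by
    intro v
    have h1 : Integrable (fun v' => (β v * f v) * ⟪v, β v' • G v'⟫) :=
      (hg_int.const_inner v).const_mul _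
    have h2 : Integrable (fun v' => (β v * f v) * (β v' * ⟪v', G v'⟫)) := hB_int.const_mul _
    have e : (fun v' => β v * β v' * ⟪v - v', f v • G v' - f v' • G v⟫)
        = fun v' => ((β v * f v) * ⟪v, β v' • G v'⟫ - (β v * f v) * (β v' * ⟪v', G v'⟫))
            - (β v * β v' * (⟪v - v', G v⟫ * f v')) := by
      funext v'
      simp only [inner_sub_left, inner_sub_right, real_inner_smul_right]
      ring
    have h12 : Integrable (fun v' => (β v * f v) * ⟪v, β v' • G v'⟫
        - (β v * f v) * (β v' * ⟪v', G v'⟫)) := h1.sub h2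
    rw [e, integral_sub h12 (hI1 v), integral_sub h1 h2,
      integral_const_mul, integral_const_mul, integral_inner hg_int v, hAint, hBint, key1 v]
  -- outer integrals
  have houtA : Integrable (fun v => (β v * ⟪v, G v⟫) * nβ) := hB_int.mul_const _
  have houtB : Integrable (fun v => ⟪pβ, β v • G v⟫) := hg_int.const_inner pβ
  have outer1 : (∫ v, ((β v * ⟪v, G v⟫) * nβ - ⟪pβ, β v • G v⟫))
      = (-Bβ) * nβ - ⟪pβ, -Aβ⟫ := by
    rw [integral_sub houtA houtB, integral_mul_const, integral_inner hg_int pβ, hBint, hAint]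
  constructor
  · rw [show (∫ v, ∫ v', β v * β v' * (⟪v - v', G v⟫ * f v'))
        = ∫ v, ((β v * ⟪v, G v⟫) * nβ - ⟪pβ, β v • G v⟫) from
        integral_congr_ae (Filter.Eventually.of_forall key1), outer1,
      inner_neg_right, real_inner_comm pβ Aβ]
    ring
  · have hIa : Integrable (fun v => (β v * f v) * ⟪v, -Aβ⟫) := by
      refine (hhv_int.inner_const (-Aβ)).congr (Filter.Eventually.of_forall fun v => ?_)
      simp only [real_inner_smul_left]
    have hIb : Integrable (fun v => (β v * f v) * (-Bβ)) := hh_int.mul_const _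
    have ea : (∫ v, (β v * f v) * ⟪v, -Aβ⟫) = ⟪pβ, -Aβ⟫ := by
      rw [show (fun v => (β v * f v) * ⟪v, -Aβ⟫) = fun v => ⟪(β v * f v) • v, -Aβ⟫ from
          funext fun v => (real_inner_smul_left _ _ _).symm]
      rw [show (∫ v, ⟪(β v * f v) • v, -Aβ⟫) = ∫ v, ⟪-Aβ, (β v * f v) • v⟫ from
          integral_congr_ae (Filter.Eventually.of_forall fun v => real_inner_comm _ _),
        integral_inner hhv_int (-Aβ), hpint, real_inner_comm]
    have hIab : Integrable (fun v => (β v * f v) * ⟪v, -Aβ⟫ - (β v * f v) * (-Bβ)) :=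
      hIa.sub hIb
    have houtAB : Integrable (fun v => (β v * ⟪v, G v⟫) * nβ - ⟪pβ, β v • G v⟫) :=
      houtA.sub houtB
    rw [show (∫ v, ∫ v', β v * β v' * ⟪v - v', f v • G v' - f v' • G v⟫)
        = ∫ v, (((β v * f v) * ⟪v, -Aβ⟫ - (β v * f v) * (-Bβ))
            - ((β v * ⟪v, G v⟫) * nβ - ⟪pβ, β v • G v⟫)) from
        integral_congr_ae (Filter.Eventually.of_forall key2),
      integral_sub hIab houtAB, integral_sub hIa hIb, ea,
      integral_mul_const, hnint, outer1]
    simp only [inner_neg_right, real_inner_comm pβ Aβ]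
    ring
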